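/- The space of derivations of the algebra 𝔠₈₁ on ℂ⁵ with nonzero basis products e₁e₁ = e₂, e₁e₂ = e₃, e₁e₃ = e₄, e₂e₂ = 2e₄, e₂e₄ = e₅ is 3-dimensional over ℂ. -/
import Mathlib


/-- Structure constants of 𝔠₈₁: e₁e₁ = e₂, e₁e₂ = e₃, e₁e₃ = e₄, e₂e₂ = 2e₄,
e₂e₄ = e₅ (extended symmetrically; unlisted products are zero). -/
noncomputable def tbl81 : Fin 5 → Fin 5 → Fin 5 → ℂ :=
  ![![![0,1,0,0,0], ![0,0,1,0,0], ![0,0,0,1,0], 0, 0],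
    ![![0,0,1,0,0], ![0,0,0,2,0], 0, ![0,0,0,0,1], 0],
    ![![0,0,0,1,0], 0, 0, 0, 0],
    ![0, ![0,0,0,0,1], 0, 0, 0],
    0]

/-- The bilinear multiplication of 𝔠₈₁ on ℂ⁵. -/
noncomputable def mul81 (x y : Fin 5 → ℂ) : Fin 5 → ℂ :=
  fun k => ∑ i, ∑ j, x i * y j * tbl81 i j k

lemma mul81_add_left (x x' y : Fin 5 → ℂ) :
    mul81 (x + x') y = mul81 x y + mul81 x' y := by
  funext k
  simp [mul81, add_mul, Finset.sum_add_distrib]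

lemma mul81_add_right (x y y' : Fin 5 → ℂ) :
    mul81 x (y + y') = mul81 x y + mul81 x y' := by
  funext k
  simp [mul81, mul_add, add_mul, Finset.sum_add_distrib]

lemma mul81_smul_left (c : ℂ) (x y : Fin 5 → ℂ) :
    mul81 (c • x) y = c • mul81 x y := by
  funext k
  simp only [mul81, Pi.smul_apply, smul_eq_mul, Finset.mul_sum]
  exact Finset.sum_congr rfl fun i _ => Finset.sum_congr rfl fun j _ => by ring

lemma mul81_smul_right (c : ℂ) (x y : Fin 5 → ℂ) :
    mul81 x (c • y) = c • mul81 x y := by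
  funext k
  simp only [mul81, Pi.smul_apply, smul_eq_mul, Finset.mul_sum]
  exact Finset.sum_congr rfl fun i _ => Finset.sum_congr rfl fun j _ => by ring

lemma mul81_zero_left (y : Fin 5 → ℂ) : mul81 0 y = 0 := by
  funext k; simp [mul81]

lemma mul81_zero_right (x : Fin 5 → ℂ) : mul81 x 0 = 0 := by
  funext k; simp [mul81]

/-- The space of derivations of the algebra 𝔠₈₁, i.e. the ℂ-linear maps `D` with
`D(x·y) = D(x)·y + x·D(y)` for all `x, y`. -/
noncomputable def Der81 : Submodule ℂ ((Fin 5 → ℂ) →ₗ[ℂ] (Fin 5 → ℂ)) where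
  carrier := {D | ∀ x y : Fin 5 → ℂ, D (mul81 x y) = mul81 (D x) y + mul81 x (D y)}
  add_mem' := by
    intro D₁ D₂ h₁ h₂ x y
    simp only [LinearMap.add_apply, h₁ x y, h₂ x y, mul81_add_left, mul81_add_right]
    abel
  zero_mem' := by
    intro x y
    simp [mul81_zero_left, mul81_zero_right]
  smul_mem' := by
    intro c D hD x y
    simp only [LinearMap.smul_apply, hD x y, mul81_smul_left, mul81_smul_right,
      smul_add]


/-! ### Auxiliary material for the dimension computation -/

def eps5 (t : Fin 5) : Fin 5 → ℂ := fun j => if t = j then 1 else 0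

noncomputable def matLin (M : Fin 5 → Fin 5 → ℂ) : (Fin 5 → ℂ) →ₗ[ℂ] (Fin 5 → ℂ) where
  toFun x := fun k => ∑ j, M k j * x j
  map_add' x y := by
    funext k
    simp [mul_add, Finset.sum_add_distrib]
  map_smul' c x := by
    funext k
    simp only [Pi.smul_apply, smul_eq_mul, RingHom.id_apply, Finset.mul_sum]
    exact Finset.sum_congr rfl fun j _ => by ring

lemma matLin_apply (M : Fin 5 → Fin 5 → ℂ) (x : Fin 5 → ℂ) (k : Fin 5) :
    matLin M x k = ∑ j, M k j * x j := rfl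

set_option maxHeartbeats 1000000 in
lemma mul81_eq (x y : Fin 5 → ℂ) :
    mul81 x y = ![0, x 0 * y 0, x 0 * y 1 + x 1 * y 0,
      x 0 * y 2 + 2 * (x 1 * y 1) + x 2 * y 0, x 1 * y 3 + x 3 * y 1] := by
  funext k
  fin_cases k <;>
    · simp [mul81, Fin.sum_univ_five, tbl81, Matrix.vecHead, Matrix.vecTail]
      try ring

noncomputable def Dmap1 := matLin ![0, 0, 0, 0, ![1,0,0,0,0]]
noncomputable def Dmap2 := matLin ![0, 0, 0, ![1,0,0,0,0], ![0,0,1,0,0]]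
noncomputable def Dmap3 := matLin ![![1/6,0,0,0,0], ![0,1/3,0,0,0], ![0,0,1/2,0,0], ![0,0,0,2/3,0], ![0,0,0,0,1]]

set_option maxHeartbeats 1000000 in
lemma Dmap1_mem : Dmap1 ∈ Der81 := by
  intro x y
  funext k
  simp only [Dmap1, Pi.add_apply, mul81_eq, matLin_apply, Fin.sum_univ_five]
  fin_cases k <;> · simp [Matrix.vecHead, Matrix.vecTail]; try ring

set_option maxHeartbeats 1000000 in
lemma Dmap2_mem : Dmap2 ∈ Der81 := by
  intro x y
  funext k
  simp only [Dmap2, Pi.add_apply, mul81_eq, matLin_apply, Fin.sum_univ_five]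
  fin_cases k <;> · simp [Matrix.vecHead, Matrix.vecTail]; try ring

set_option maxHeartbeats 1000000 in
lemma Dmap3_mem : Dmap3 ∈ Der81 := by
  intro x y
  funext k
  simp only [Dmap3, Pi.add_apply, mul81_eq, matLin_apply, Fin.sum_univ_five]
  fin_cases k <;> · simp [Matrix.vecHead, Matrix.vecTail]; try ring

lemma mul81_eps_right (x : Fin 5 → ℂ) (j k : Fin 5) :
    mul81 x (eps5 j) k = ∑ r, x r * tbl81 r j k := by
  simp [mul81, eps5, mul_ite, ite_mul, Finset.sum_ite_eq]

lemma mul81_eps_left (y : Fin 5 → ℂ) (i k : Fin 5) :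
    mul81 (eps5 i) y k = ∑ r, y r * tbl81 i r k := by
  simp [mul81, eps5, mul_ite, ite_mul, Finset.sum_ite_eq]

lemma mul81_eps_eps (i j : Fin 5) : mul81 (eps5 i) (eps5 j) = tbl81 i j := by
  funext k
  simp [mul81_eps_right, eps5, ite_mul, Finset.sum_ite_eq]

lemma D81_apply (D : (Fin 5 → ℂ) →ₗ[ℂ] (Fin 5 → ℂ)) (x : Fin 5 → ℂ) :
    D x = ∑ t, x t • D (eps5 t) := by
  conv_lhs => rw [pi_eq_sum_univ x, map_sum]
  simp only [map_smul]
  rfl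

noncomputable def phi81 : Der81 →ₗ[ℂ] (Fin 3 → ℂ) where
  toFun D := ![D.1 (eps5 0) 4, D.1 (eps5 2) 4, D.1 (eps5 4) 4]
  map_add' D E := by
    funext i
    fin_cases i <;> simp
  map_smul' c D := by
    funext i
    fin_cases i <;> simp

set_option maxHeartbeats 1000000 in
lemma phi81_surjective : Function.Surjective phi81 := by
  intro t
  refine ⟨t 0 • ⟨Dmap1, Dmap1_mem⟩ + t 1 • ⟨Dmap2, Dmap2_mem⟩ + t 2 • ⟨Dmap3, Dmap3_mem⟩, ?_⟩
  funext i
  fin_cases i <;>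
    simp [phi81, Dmap1, Dmap2, Dmap3, matLin_apply, eps5, Fin.sum_univ_five,
      Matrix.vecHead, Matrix.vecTail]

set_option maxHeartbeats 1000000 in
lemma phi81_zero (p : Der81) (hp : phi81 p = 0) : p = 0 := by
  obtain ⟨D, hD⟩ := p
  have h40 : D (eps5 0) 4 = 0 := by simpa [phi81] using congrFun hp 0
  have h42 : D (eps5 2) 4 = 0 := by simpa [phi81] using congrFun hp 1
  have h44 : D (eps5 4) 4 = 0 := by simpa [phi81] using congrFun hp 2
  have key : ∀ i j k : Fin 5, (∑ t, tbl81 i j t * D (eps5 t) k) =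
      (∑ r, D (eps5 i) r * tbl81 r j k) + ∑ r, D (eps5 j) r * tbl81 i r k := by
    intro i j k
    have h := congrFun (hD (eps5 i) (eps5 j)) k
    rw [mul81_eps_eps] at h
    rw [D81_apply D (tbl81 i j)] at h
    simpa [mul81_eps_right, mul81_eps_left, Finset.sum_apply] using h
  have E000 := key 0 0 0
  have E001 := key 0 0 1
  have E002 := key 0 0 2
  have E003 := key 0 0 3
  have E004 := key 0 0 4
  have E010 := key 0 1 0
  have E011 := key 0 1 1
  have E012 := key 0 1 2
  have E013 := key 0 1 3
  have E014 := key 0 1 4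
  have E020 := key 0 2 0
  have E021 := key 0 2 1
  have E022 := key 0 2 2
  have E023 := key 0 2 3
  have E024 := key 0 2 4
  have E034 := key 0 3 4
  have E041 := key 0 4 1
  have E042 := key 0 4 2
  have E043 := key 0 4 3
  have E114 := key 1 1 4
  have E133 := key 1 3 3
  have E134 := key 1 3 4
  simp only [Fin.sum_univ_five, tbl81, Matrix.cons_val_zero, Matrix.cons_val_one,
    Matrix.head_cons, Matrix.cons_val_two, Matrix.tail_cons, Matrix.cons_val_three,
    Matrix.cons_val_four, Matrix.head_fin_const,
    Pi.zero_apply, zero_mul, mul_zero, one_mul, mul_one, add_zero, zero_add] at E000 E001 E002 E003 E004 E010 E011 E012 E013 E014 E020 E021 E022 E023 E024 E034 E041 E042 E043 E114 E133 E134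
  have h00 : D (eps5 0) 0 = 0 := by linear_combination (-1/3 : ℂ) * E001 + (-1/6 : ℂ) * E012 + (-1/6 : ℂ) * E023 + (-1/6 : ℂ) * E134 + (1/6 : ℂ) * h44
  have h01 : D (eps5 1) 0 = 0 := by linear_combination (1 : ℂ) * E000
  have h02 : D (eps5 2) 0 = 0 := by linear_combination (1 : ℂ) * E010
  have h03 : D (eps5 3) 0 = 0 := by linear_combination (1 : ℂ) * E020
  have h04 : D (eps5 4) 0 = 0 := by linear_combination (-1 : ℂ) * E041
  have h10 : D (eps5 0) 1 = 0 := by linear_combination (-1 : ℂ) * E034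
  have h11 : D (eps5 1) 1 = 0 := by linear_combination (1/3 : ℂ) * E001 + (-1/3 : ℂ) * E012 + (-1/3 : ℂ) * E023 + (-1/3 : ℂ) * E134 + (1/3 : ℂ) * h44
  have h12 : D (eps5 2) 1 = 0 := by linear_combination (1 : ℂ) * E000 + (1 : ℂ) * E011
  have h13 : D (eps5 3) 1 = 0 := by linear_combination (1 : ℂ) * E010 + (1 : ℂ) * E021
  have h14 : D (eps5 4) 1 = 0 := by linear_combination (-1 : ℂ) * E042
  have h20 : D (eps5 0) 2 = 0 := by linear_combination (-1/2 : ℂ) * E003 + (1/2 : ℂ) * E024 + (-1/4 : ℂ) * E114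
  have h21 : D (eps5 1) 2 = 0 := by linear_combination (1 : ℂ) * E002 + (-2 : ℂ) * E034
  have h22 : D (eps5 2) 2 = 0 := by linear_combination (1/2 : ℂ) * E012 + (-1/2 : ℂ) * E023 + (-1/2 : ℂ) * E134 + (1/2 : ℂ) * h44
  have h23 : D (eps5 3) 2 = 0 := by linear_combination (1 : ℂ) * E000 + (1 : ℂ) * E011 + (1 : ℂ) * E022
  have h24 : D (eps5 4) 2 = 0 := by linear_combination (-1 : ℂ) * E043
  have h30 : D (eps5 0) 3 = 0 := by linear_combination (-1 : ℂ) * E014 + (1 : ℂ) * h42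
  have h31 : D (eps5 1) 3 = 0 := by linear_combination (1 : ℂ) * E024 + (-1/2 : ℂ) * E114
  have h32 : D (eps5 2) 3 = 0 := by linear_combination (1 : ℂ) * E002 + (1 : ℂ) * E013 + (-4 : ℂ) * E034
  have h33 : D (eps5 3) 3 = 0 := by linear_combination (-1/3 : ℂ) * E001 + (1/3 : ℂ) * E012 + (1/3 : ℂ) * E023 + (-2/3 : ℂ) * E134 + (2/3 : ℂ) * h44
  have h34 : D (eps5 4) 3 = 0 := by linear_combination (2 : ℂ) * E010 + (2 : ℂ) * E021 + (1 : ℂ) * E133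
  have h41 : D (eps5 1) 4 = 0 := by linear_combination (1 : ℂ) * E004
  have h43 : D (eps5 3) 4 = 0 := by linear_combination (1 : ℂ) * E024
  have z0 : D (eps5 0) = 0 := by funext k; fin_cases k; exacts [h00, h10, h20, h30, h40]
  have z1 : D (eps5 1) = 0 := by funext k; fin_cases k; exacts [h01, h11, h21, h31, h41]
  have z2 : D (eps5 2) = 0 := by funext k; fin_cases k; exacts [h02, h12, h22, h32, h42]
  have z3 : D (eps5 3) = 0 := by funext k; fin_cases k; exacts [h03, h13, h23, h33, h43]
  have z4 : D (eps5 4) = 0 := by funext k; fin_cases k; exacts [h04, h14, h24, h34, h44]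
  apply Subtype.ext
  show D = 0
  apply LinearMap.ext
  intro x
  show D x = 0
  rw [D81_apply D x]
  simp [Fin.sum_univ_five, z0, z1, z2, z3, z4]

lemma phi81_injective : Function.Injective phi81 := by
  intro a b hab
  have h2 : phi81 (a - b) = 0 := by
    have := map_sub phi81 a b
    rw [this, hab, sub_self]
  exact sub_eq_zero.mp (phi81_zero _ h2)

/-- The space of derivations of the algebra 𝔠₈₁ is 3-dimensional over ℂ. -/
theorem der_c81_dim_three : Module.finrank ℂ Der81 = 3 := by
  have e : Der81 ≃ₗ[ℂ] (Fin 3 → ℂ) :=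
    LinearEquiv.ofBijective phi81 ⟨phi81_injective, phi81_surjective⟩
  rw [e.finrank_eq]
  simp [Module.finrank_fin_fun]
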